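/- For n > 3 and k ∈ [2, n-2], θ_k^{(n)} = 1 + Σ_{j=k-1}^{n-2} θ_j^{(n-1)}. -/

import Mathlib

open Finset

/-- `l` encodes a (non-degenerate) indexing matrix on `n` points: the columns,
listed left to right, as pairs `(top entry, bottom entry)`.  Entries lie in
`[0, n-1]`, the first row is strictly increasing, the second row is weakly
increasing, repeated second-row entries are `0`, and each top entry is at
least the corresponding bottom entry. -/
def IsIndexingMatrix (n : ℕ) (l : List (ℕ × ℕ)) : Prop :=
  1 ≤ l.length ∧ l.length ≤ n ∧
  (∀ p ∈ l, p.1 < n ∧ p.2 ≤ p.1) ∧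
  l.Pairwise (fun p q => p.1 < q.1 ∧ p.2 ≤ q.2 ∧ (p.2 = q.2 → p.2 = 0))

/-- A positive indexing matrix: all entries are positive. -/
def IsPositiveIndexingMatrix (n : ℕ) (l : List (ℕ × ℕ)) : Prop :=
  IsIndexingMatrix n l ∧ ∀ p ∈ l, 0 < p.1 ∧ 0 < p.2

/-- `θ_k^{(n)}`: the number of positive indexing matrices whose `(1,1)` entry
equals `k`. -/
noncomputable def theta (n k : ℕ) : ℕ :=
  Nat.card {l : List (ℕ × ℕ) //
    IsPositiveIndexingMatrix n l ∧ l.head?.map Prod.fst = some k}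

/-- The blob-rank of an indexing matrix: the number of its columns containing
a `0`. -/
def blobRank (l : List (ℕ × ℕ)) : ℕ := l.countP (fun p => p.1 == 0 || p.2 == 0)

/-- `Ω_r^{(n)}`: the number of indexing matrices on `n` points of blob-rank `r`,
the degenerate indexing matrix being counted in `Ω_0^{(n)}`. -/
noncomputable def Omega (n r : ℕ) : ℕ :=
  Nat.card {l : List (ℕ × ℕ) // IsIndexingMatrix n l ∧ blobRank l = r} +
    (if r = 0 then 1 else 0)

/-- `χ_k^{(n)} = Σ_{i₁+⋯+i_k = n-k} C_{i₁} ⋯ C_{i_k}` (Catalan numbers). -/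
def chi (n k : ℕ) : ℕ :=
  ∑ t ∈ Finset.Nat.antidiagonalTuple k (n - k), ∏ j, catalan (t j)

/-- A Temperley–Lieb diagram on `n` points: a non-crossing perfect matching of
`2n` boundary points numbered clockwise, given by a fixed-point free
involution. -/
structure TLDiagram (n : ℕ) where
  f : Fin (2 * n) → Fin (2 * n)
  involutive : ∀ x, f (f x) = x
  noFixedPoint : ∀ x, f x ≠ x
  noncrossing : ∀ a b : Fin (2 * n), a < b → b < f a → f a < f b → False

/-- `a` is the left (smaller) endpoint of an arc of `D`. -/
def TLDiagram.IsArc {n : ℕ} (D : TLDiagram n) (a : Fin (2 * n)) : Prop :=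
  a < D.f a

/-- The arc with left endpoint `a` is exposed to the left side of the diagram,
i.e. it is not nested inside any other arc. -/
def TLDiagram.IsExposed {n : ℕ} (D : TLDiagram n) (a : Fin (2 * n)) : Prop :=
  a < D.f a ∧ ∀ c, ¬ (c < a ∧ D.f a < D.f c)

/-- The number of arcs of `D` exposed to the left side. -/
noncomputable def exposedCount {n : ℕ} (D : TLDiagram n) : ℕ :=
  Nat.card {a : Fin (2 * n) // D.IsExposed a}

/-- A `d`-abacus blob diagram on `n` points: a TL-diagram together with blobs
on some arcs exposed to the left, one bead count in `ℤ/dℤ` on every arc, and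
an extra bead count on every blobbed arc (its second component). -/
structure AbacusBlobDiagram (d n : ℕ) where
  base : TLDiagram n
  blob : Fin (2 * n) → Bool
  blob_exposed : ∀ a, blob a = true → base.IsExposed a
  beads₁ : Fin (2 * n) → ZMod d
  beads₂ : Fin (2 * n) → ZMod d
  beads₁_arc : ∀ a, ¬ base.IsArc a → beads₁ a = 0
  beads₂_blob : ∀ a, blob a = false → beads₂ a = 0

/-- A `d`-abacus hook diagram on `n` points: a blobbed TL-diagram in which all
blobbed arcs are merged into the single hook component through `0, 0'`, with a
bead count in `ℤ/dℤ` on every unblobbed arc and one on the hook component. -/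
structure AbacusHookDiagram (d n : ℕ) where
  base : TLDiagram n
  blob : Fin (2 * n) → Bool
  blob_exposed : ∀ a, blob a = true → base.IsExposed a
  beads : Fin (2 * n) → ZMod d
  beads_arc : ∀ a, ¬ base.IsArc a ∨ blob a = true → beads a = 0
  hookBeads : ZMod d


namespace Stmt5Aux

def IsIndexingMatrix' (n : ℕ) (l : List (ℕ × ℕ)) : Prop :=
  1 ≤ l.length ∧ l.length ≤ n ∧
  (∀ p ∈ l, p.1 < n ∧ p.2 ≤ p.1) ∧
  l.Pairwise (fun p q => p.1 < q.1 ∧ p.2 ≤ q.2 ∧ (p.2 = q.2 → p.2 = 0))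

def Good (n k : ℕ) (l : List (ℕ × ℕ)) : Prop :=
  (IsIndexingMatrix' n l ∧ ∀ p ∈ l, 0 < p.1 ∧ 0 < p.2) ∧
    l.head?.map Prod.fst = some k

def Lo (l : List (ℕ × ℕ)) : Prop := l.head?.map Prod.snd = some 1
def Hi (l : List (ℕ × ℕ)) : Prop := ∃ c, l.head?.map Prod.snd = some c ∧ 2 ≤ c

/-- key length bound -/
lemma lenBound {n : ℕ} {l : List (ℕ × ℕ)}
    (hp : l.Pairwise fun p q => p.1 < q.1)
    (hm : ∀ p ∈ l, 0 < p.1 ∧ p.1 < n) : l.length ≤ n - 1 := by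
  have h1 : (l.map Prod.fst).Pairwise (· < ·) := List.pairwise_map.mpr hp
  have h2 : (l.map Prod.fst).Nodup := h1.imp Nat.ne_of_lt
  have h3 : (l.map Prod.fst).toFinset ⊆ Finset.Ioo 0 n := by
    intro x hx
    simp only [List.mem_toFinset, List.mem_map] at hx
    obtain ⟨p, hpl, rfl⟩ := hx
    exact Finset.mem_Ioo.mpr (hm p hpl)
  calc l.length = (l.map Prod.fst).length := (List.length_map _).symm
    _ = (l.map Prod.fst).toFinset.card := (List.toFinset_card_of_nodup h2).symm
    _ ≤ (Finset.Ioo 0 n).card := Finset.card_le_card h3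
    _ = n - 1 := by rw [Nat.card_Ioo]; omega

lemma good_facts {n k : ℕ} {l : List (ℕ × ℕ)} (h : Good n k l) :
    ∃ b t, l = (k, b) :: t ∧ 0 < b ∧
      (∀ p ∈ t, k < p.1 ∧ b ≤ p.2 ∧ (b = p.2 → b = 0)) := by
  obtain ⟨⟨⟨hl1, _, _, hpw⟩, hpos⟩, hhead⟩ := h
  match l, hl1 with
  | p₀ :: t, _ =>
    have hk : p₀.1 = k := by simpa using hhead
    refine ⟨p₀.2, t, by rw [← hk], (hpos p₀ (by simp)).2, ?_⟩
    intro p hp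
    have := (List.pairwise_cons.mp hpw).1 p hp
    exact ⟨hk ▸ this.1, this.2⟩

/-- All second entries are ≥ 2 when the head's second entry is ≥ 2. -/
lemma hi_all {n k : ℕ} {l : List (ℕ × ℕ)} (hG : Good n k l) (hHi : Hi l) :
    ∀ p ∈ l, 2 ≤ p.2 := by
  obtain ⟨b, t, rfl, hbpos, htail⟩ := good_facts hG
  obtain ⟨c, hc, hc2⟩ := hHi
  have hbc : b = c := by simpa using hc
  intro p hp
  rcases List.mem_cons.mp hp with rfl | hp
  · simpa [hbc] using hc2
  · exact le_trans (hbc ▸ hc2) (htail p hp).2.1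

lemma good_all {n k : ℕ} {l : List (ℕ × ℕ)} (hG : Good n k l) :
    ∀ p ∈ l, 0 < p.2 ∧ p.2 ≤ p.1 ∧ p.1 < n := by
  intro p hp
  exact ⟨(hG.1.2 p hp).2, (hG.1.1.2.2.1 p hp).2, (hG.1.1.2.2.1 p hp).1⟩

/-- finiteness -/
lemma finiteSub (n k : ℕ) (Q : List (ℕ × ℕ) → Prop)
    (hQ : ∀ l, Q l → Good n k l) : Finite {l // Q l} := by
  have hfin : {l : List (Fin n × Fin n) | l.length ≤ n}.Finite :=
    List.finite_length_le _ n
  haveI := hfin.to_subtype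
  have bound : ∀ l, Q l → ∀ p ∈ l, p.1 < n ∧ p.2 < n := by
    intro l hl p hp
    have h := good_all (hQ l hl) p hp
    exact ⟨h.2.2, lt_of_le_of_lt h.2.1 h.2.2⟩
  refine Finite.of_injective
    (fun x => (⟨x.1.pmap
        (fun p hp => ((⟨p.1, hp.1⟩ : Fin n), (⟨p.2, hp.2⟩ : Fin n)))
        (bound x.1 x.2), by
          simp only [Set.mem_setOf_eq, List.length_pmap]
          exact (hQ x.1 x.2).1.1.2.1⟩ :
      {l : List (Fin n × Fin n) | l.length ≤ n})) ?_
  have key : ∀ (l : List (ℕ × ℕ)) (h : ∀ p ∈ l, p.1 < n ∧ p.2 < n),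
      (l.pmap (fun p hp => ((⟨p.1, hp.1⟩ : Fin n), (⟨p.2, hp.2⟩ : Fin n))) h).map
        (fun q => ((q.1 : ℕ), (q.2 : ℕ))) = l := by
    intro l h
    rw [List.map_pmap]
    calc l.pmap (fun p _ => (p.1, p.2)) h = l.map (fun p => (p.1, p.2)) :=
          List.pmap_eq_map _
      _ = l := by simp
  intro x y hxy
  apply Subtype.ext
  have := congrArg (fun z => (Subtype.val z).map (fun q => ((q.1 : ℕ), (q.2 : ℕ)))) hxy
  simpa [key] using this


def sub1 (l : List (ℕ × ℕ)) : List (ℕ × ℕ) := l.map fun p => (p.1 - 1, p.2 - 1)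
def add1 (l : List (ℕ × ℕ)) : List (ℕ × ℕ) := l.map fun p => (p.1 + 1, p.2 + 1)

lemma good_sub1 {n k : ℕ} {l : List (ℕ × ℕ)} (hG : Good n k l) (hHi : Hi l) :
    Good (n - 1) (k - 1) (sub1 l) := by
  have hall : ∀ p ∈ l, 2 ≤ p.2 ∧ 2 ≤ p.1 ∧ p.2 ≤ p.1 ∧ p.1 < n := by
    intro p hp
    have h1 := hi_all hG hHi p hp
    have h2 := good_all hG p hp
    exact ⟨h1, le_trans h1 h2.2.1, h2.2.1, h2.2.2⟩
  obtain ⟨⟨⟨hl1, hl2, hmem, hpw⟩, hpos⟩, hhead⟩ := hG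
  refine ⟨⟨⟨?_, ?_, ?_, ?_⟩, ?_⟩, ?_⟩
  · simpa [sub1] using hl1
  · have := lenBound (hpw.imp fun h => h.1) (fun p hp => ⟨(hpos p hp).1, (hmem p hp).1⟩)
    simpa [sub1] using this
  · rintro q hq
    simp only [sub1, List.mem_map] at hq
    obtain ⟨p, hp, rfl⟩ := hq
    have := hall p hp
    constructor <;> [skip; skip] <;> simp <;> omega
  · rw [sub1, List.pairwise_map]
    have hpw' := List.Pairwise.and_mem.mp hpw
    refine hpw'.imp ?_
    rintro p q ⟨hpl, hql, h1, h2, h3⟩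
    have hp' := hall p hpl
    have hq' := hall q hql
    refine ⟨by omega, by omega, ?_⟩
    intro heq
    exfalso
    have : p.2 = q.2 := by omega
    have := h3 this
    omega
  · rintro q hq
    simp only [sub1, List.mem_map] at hq
    obtain ⟨p, hp, rfl⟩ := hq
    have := hall p hp
    constructor <;> simp <;> omega
  · obtain ⟨b, t, rfl, _, _⟩ := good_facts ⟨⟨⟨hl1, hl2, hmem, hpw⟩, hpos⟩, hhead⟩
    simp [sub1]

lemma good_add1 {n k : ℕ} {l : List (ℕ × ℕ)} (hG : Good (n - 1) (k - 1) l) :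
    Good n k (add1 l) ∧ Hi (add1 l) := by
  have hk2 : 2 ≤ k := by
    obtain ⟨b, t, rfl, _, _⟩ := good_facts hG
    have := (hG.1.2 (k - 1, b) (by simp)).1
    omega
  have hall := good_all hG
  obtain ⟨⟨⟨hl1, hl2, hmem, hpw⟩, hpos⟩, hhead⟩ := hG
  refine ⟨⟨⟨⟨?_, ?_, ?_, ?_⟩, ?_⟩, ?_⟩, ?_⟩
  · simpa [add1] using hl1
  · have : l.length ≤ n - 1 := hl2
    have hn : 1 ≤ n := by
      match l, hl1 with
      | p :: t, _ => have := (hmem p (by simp)).1; omega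
    simp only [add1, List.length_map]
    omega
  · rintro q hq
    simp only [add1, List.mem_map] at hq
    obtain ⟨p, hp, rfl⟩ := hq
    have := (hmem p hp).1
    have := (hmem p hp).2
    constructor <;> simp <;> omega
  · rw [add1, List.pairwise_map]
    have hpw' := List.Pairwise.and_mem.mp hpw
    refine hpw'.imp ?_
    rintro p q ⟨hpl, hql, h1, h2, h3⟩
    refine ⟨by omega, by omega, ?_⟩
    intro heq
    exfalso
    have : p.2 = q.2 := by omega
    have := h3 this
    have := (hpos p hpl).2
    omega
  · rintro q hq
    simp only [add1, List.mem_map] at hq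
    obtain ⟨p, hp, rfl⟩ := hq
    simp
  · match l, hl1 with
    | p :: t, _ =>
      have : p.1 = k - 1 := by simpa using hhead
      simp [add1, this]
      omega
  · match l, hl1 with
    | p :: t, _ =>
      have := (hpos p (by simp)).2
      exact ⟨p.2 + 1, by simp [add1], by omega⟩

def e1 (n k : ℕ) : {l // Good n k l ∧ Hi l} ≃ {l // Good (n - 1) (k - 1) l} where
  toFun x := ⟨sub1 x.1, good_sub1 x.2.1 x.2.2⟩
  invFun x := ⟨add1 x.1, (good_add1 x.2).1, (good_add1 x.2).2⟩
  left_inv x := by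
    apply Subtype.ext
    have hall := good_all x.2.1
    have h2 := hi_all x.2.1 x.2.2
    show add1 (sub1 x.1) = x.1
    rw [add1, sub1, List.map_map]
    calc x.1.map ((fun p : ℕ × ℕ => (p.1 + 1, p.2 + 1)) ∘ fun p => (p.1 - 1, p.2 - 1))
        = x.1.map id := by
          apply List.map_congr_left
          intro p hp
          have h1 := hall p hp
          have h3 := h2 p hp
          obtain ⟨ha, hb, hc⟩ := h1
          simp only [Function.comp_apply, id_eq]
          ext <;> simp <;> omega
      _ = x.1 := List.map_id _
  right_inv x := by
    apply Subtype.ext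
    show sub1 (add1 x.1) = x.1
    rw [add1, sub1, List.map_map]
    calc x.1.map ((fun p : ℕ × ℕ => (p.1 - 1, p.2 - 1)) ∘ fun p => (p.1 + 1, p.2 + 1))
        = x.1.map id := by apply List.map_congr_left; intro p hp; simp
      _ = x.1 := List.map_id _


lemma hi_of_not_lo {n k : ℕ} {l : List (ℕ × ℕ)} (hG : Good n k l) (h : ¬ Lo l) :
    Hi l := by
  obtain ⟨b, t, rfl, hb, _⟩ := good_facts hG
  refine ⟨b, by simp, ?_⟩
  have hb1 : b ≠ 1 := fun hb1 => h (by simp [Lo, hb1])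
  omega

lemma not_lo_of_hi {n k : ℕ} {l : List (ℕ × ℕ)} (hG : Good n k l) (h : Hi l) :
    ¬ Lo l := by
  obtain ⟨b, t, rfl, hb, _⟩ := good_facts hG
  obtain ⟨c, hc, hc2⟩ := h
  simp only [List.head?_cons, Option.map_some, Option.some.injEq] at hc
  simp only [Lo, List.head?_cons, Option.map_some, Option.some.injEq]
  omega

instance : DecidablePred Lo := fun l => by unfold Lo; infer_instance

def eSplit (n k : ℕ) :
    {l // Good n k l} ≃ {l // Good n k l ∧ Lo l} ⊕ {l // Good n k l ∧ Hi l} where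
  toFun x :=
    if h : Lo x.1 then Sum.inl ⟨x.1, x.2, h⟩
    else Sum.inr ⟨x.1, x.2, hi_of_not_lo x.2 h⟩
  invFun y := y.elim (fun z => ⟨z.1, z.2.1⟩) (fun z => ⟨z.1, z.2.1⟩)
  left_inv x := by
    dsimp only
    split <;> rfl
  right_inv y := by
    rcases y with z | z <;> simp only [Sum.elim_inl, Sum.elim_inr]
    · exact dif_pos z.2.2
    · exact dif_neg (not_lo_of_hi z.2.1 z.2.2)

section E2
variable (n k : ℕ)

lemma good_tail {l : List (ℕ × ℕ)} (h : Good n k l ∧ Lo l)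
    {p₁ : ℕ × ℕ} {t' : List (ℕ × ℕ)} (hx : l.tail = p₁ :: t') :
    p₁.1 ∈ Finset.Icc (k + 1) (n - 1) ∧ (Good n p₁.1 (p₁ :: t') ∧ Hi (p₁ :: t')) := by
  obtain ⟨hG, hLo⟩ := h
  obtain ⟨b, t, rfl, hb, htail⟩ := good_facts hG
  have hb1 : b = 1 := by simpa [Lo] using hLo
  subst hb1
  simp only [List.tail_cons] at hx
  subst hx
  obtain ⟨⟨⟨hl1, hl2, hmem, hpw⟩, hpos⟩, hhead⟩ := hG
  have hp₁ := htail p₁ (by simp)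
  have hp₁n := (hmem p₁ (by simp)).1
  refine ⟨Finset.mem_Icc.mpr ⟨by omega, by omega⟩, ⟨⟨⟨by simp, ?_, ?_, ?_⟩, ?_⟩, by simp⟩, ?_⟩
  · simp only [List.length_cons] at hl2 ⊢; omega
  · intro p hp; exact hmem p (by simp [hp])
  · exact (List.pairwise_cons.mp hpw).2
  · intro p hp; exact hpos p (by simp [hp])
  · refine ⟨p₁.2, by simp, ?_⟩
    have := hp₁.2
    have := (hpos p₁ (by simp)).2
    omega

lemma good_cons_back (hk : 0 < k) (hkn : k + 2 ≤ n)
    {j : ℕ} (hj : j ∈ Finset.Icc (k + 1) (n - 1))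
    {t : List (ℕ × ℕ)} (ht : Good n j t ∧ Hi t) :
    Good n k ((k, 1) :: t) ∧ Lo ((k, 1) :: t) := by
  obtain ⟨hG, hHi⟩ := ht
  have hall := good_all hG
  have hall2 := hi_all hG hHi
  have hfst : ∀ p ∈ t, j ≤ p.1 := by
    obtain ⟨b, t', rfl, hb, htail⟩ := good_facts hG
    intro p hp
    rcases List.mem_cons.mp hp with rfl | hp
    · simp
    · exact le_of_lt (htail p hp).1
  obtain ⟨⟨⟨hl1, hl2, hmem, hpw⟩, hpos⟩, hhead⟩ := hG
  have hjk := Finset.mem_Icc.mp hj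
  have htlen : t.length ≤ n - 1 :=
    lenBound (hpw.imp fun h => h.1) (fun p hp => ⟨(hpos p hp).1, (hmem p hp).1⟩)
  refine ⟨⟨⟨⟨by simp, ?_, ?_, ?_⟩, ?_⟩, by simp⟩, by simp [Lo]⟩
  · simp only [List.length_cons]; omega
  · intro p hp
    rcases List.mem_cons.mp hp with rfl | hp
    · constructor <;> simp <;> omega
    · exact hmem p hp
  · rw [List.pairwise_cons]
    refine ⟨?_, hpw⟩
    intro p hp
    have h1 := hfst p hp
    have h2 := hall2 p hp
    refine ⟨by simp; omega, by simp; omega, by simp; omega⟩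
  · intro p hp
    rcases List.mem_cons.mp hp with rfl | hp
    · exact ⟨hk, by simp⟩
    · exact hpos p hp

def e2toFun (x : {l // Good n k l ∧ Lo l}) :
    Option (Σ j : (Finset.Icc (k + 1) (n - 1) : Finset ℕ),
      {l // Good n (j : ℕ) l ∧ Hi l}) :=
  match hx : x.1.tail with
  | [] => none
  | p₁ :: t' =>
      some ⟨⟨p₁.1, (good_tail n k x.2 hx).1⟩, ⟨p₁ :: t', (good_tail n k x.2 hx).2⟩⟩

lemma good_singleton (hk : 0 < k) (hkn : k + 2 ≤ n) :
    Good n k [(k, 1)] ∧ Lo [(k, 1)] := by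
  refine ⟨⟨⟨⟨by simp, by simp; omega, ?_, by simp⟩, ?_⟩, by simp⟩, by simp [Lo]⟩
  · intro p hp
    simp only [List.mem_singleton] at hp
    subst hp
    constructor <;> simp <;> omega
  · intro p hp
    simp only [List.mem_singleton] at hp
    subst hp
    exact ⟨hk, by simp⟩

def e2invFun (hk : 0 < k) (hkn : k + 2 ≤ n) :
    Option (Σ j : (Finset.Icc (k + 1) (n - 1) : Finset ℕ),
      {l // Good n (j : ℕ) l ∧ Hi l}) → {l // Good n k l ∧ Lo l}
  | none => ⟨[(k, 1)], good_singleton n k hk hkn⟩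
  | some ⟨j, t, ht⟩ => ⟨(k, 1) :: t, good_cons_back n k hk hkn j.2 ht⟩

def e2 (hk : 0 < k) (hkn : k + 2 ≤ n) :
    {l // Good n k l ∧ Lo l} ≃
      Option (Σ j : (Finset.Icc (k + 1) (n - 1) : Finset ℕ),
        {l // Good n (j : ℕ) l ∧ Hi l}) where
  toFun := e2toFun n k
  invFun := e2invFun n k hk hkn
  left_inv x := by
    have hhead : x.1 = (k, 1) :: x.1.tail := by
      obtain ⟨b, t, hx, _, _⟩ := good_facts x.2.1
      have hb1 : b = 1 := by
        have := x.2.2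
        rw [hx] at this
        simpa [Lo] using this
      rw [hx, hb1]
      rfl
    rcases hx : x.1.tail with _ | ⟨p₁, t'⟩
    · have : e2toFun n k x = none := by
        unfold e2toFun
        split
        · rfl
        · rename_i p₁ t' heq
          rw [hx] at heq
          exact absurd heq (by simp)
      rw [this]
      apply Subtype.ext
      show [(k, 1)] = x.1
      rw [hhead, hx]
    · have : e2toFun n k x =
          some ⟨⟨p₁.1, (good_tail n k x.2 hx).1⟩, ⟨p₁ :: t', (good_tail n k x.2 hx).2⟩⟩ := by
        unfold e2toFun
        split
        · rename_i heq
          rw [hx] at heq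
          exact absurd heq (by simp)
        · rename_i q u heq
          rw [hx] at heq
          obtain ⟨rfl, rfl⟩ : q = p₁ ∧ u = t' := by
            constructor <;> [exact ((List.cons.injEq _ _ _ _ ▸ heq).1).symm;
              exact ((List.cons.injEq _ _ _ _ ▸ heq).2).symm]
          rfl
      rw [this]
      apply Subtype.ext
      show (k, 1) :: p₁ :: t' = x.1
      rw [hhead, hx]
  right_inv y := by
    rcases y with _ | ⟨⟨j, hj⟩, t, ht⟩
    · rfl
    · show e2toFun n k ⟨(k, 1) :: t, _⟩ = _
      obtain ⟨b, t', rfl, hb, _⟩ := good_facts ht.1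
      have hjb : j = (j, b).1 := rfl
      unfold e2toFun
      split
      · rename_i heq
        exact absurd heq (by simp)
      · rename_i q u heq
        simp only [List.tail_cons] at heq
        obtain ⟨rfl, rfl⟩ : q = (j, b) ∧ u = t' := by
          constructor <;> [exact ((List.cons.injEq _ _ _ _ ▸ heq).1).symm;
            exact ((List.cons.injEq _ _ _ _ ▸ heq).2).symm]
        rfl

end E2


theorem key (n k : ℕ) (hn : 3 < n) (hk : 2 ≤ k) (hk' : k ≤ n - 2) :
    Nat.card {l // Good n k l} =
      1 + ∑ j ∈ Finset.Icc (k - 1) (n - 2), Nat.card {l // Good (n - 1) j l} := by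
  haveI F0 : ∀ m j, Finite {l // Good m j l} := fun m j => finiteSub m j _ (fun _ h => h)
  haveI FLo : Finite {l // Good n k l ∧ Lo l} := finiteSub n k _ (fun _ h => h.1)
  haveI FHi : ∀ j, Finite {l // Good n j l ∧ Hi l} :=
    fun j => finiteSub n j _ (fun _ h => h.1)
  have h1 : Nat.card {l // Good n k l} =
      Nat.card {l // Good n k l ∧ Lo l} + Nat.card {l // Good n k l ∧ Hi l} := by
    rw [Nat.card_congr (eSplit n k), Nat.card_sum]
  have hHi : ∀ j, Nat.card {l // Good n j l ∧ Hi l} =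
      Nat.card {l // Good (n - 1) (j - 1) l} := fun j => Nat.card_congr (e1 n j)
  have h2 : Nat.card {l // Good n k l ∧ Lo l} =
      1 + ∑ j ∈ Finset.Icc (k + 1) (n - 1), Nat.card {l // Good n j l ∧ Hi l} := by
    rw [Nat.card_congr (e2 n k (by omega) (by omega))]
    haveI : ∀ j : (Finset.Icc (k + 1) (n - 1) : Finset ℕ),
        Fintype {l // Good n (j : ℕ) l ∧ Hi l} := fun j => Fintype.ofFinite _
    rw [Nat.card_eq_fintype_card, Fintype.card_option, Fintype.card_sigma]
    simp only [← Nat.card_eq_fintype_card]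
    rw [Finset.sum_coe_sort (Finset.Icc (k + 1) (n - 1))
      (fun j => Nat.card {l // Good n j l ∧ Hi l})]
    omega
  have h3 : ∑ j ∈ Finset.Icc (k + 1) (n - 1), Nat.card {l // Good (n - 1) (j - 1) l} =
      ∑ j ∈ Finset.Icc k (n - 2), Nat.card {l // Good (n - 1) j l} := by
    have himg : Finset.Icc (k + 1) (n - 1) = Finset.image (· + 1) (Finset.Icc k (n - 2)) := by
      ext x
      simp only [Finset.mem_Icc, Finset.mem_image]
      constructor
      · rintro ⟨h1, h2⟩
        exact ⟨x - 1, ⟨by omega, by omega⟩, by omega⟩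
      · rintro ⟨a, ⟨h1, h2⟩, rfl⟩
        omega
    rw [himg, Finset.sum_image (by intro a _ b _ h; simp only at h; omega)]
    simp only [Nat.add_sub_cancel]
  have hins : Finset.Icc (k - 1) (n - 2) = insert (k - 1) (Finset.Icc k (n - 2)) := by
    ext x
    simp only [Finset.mem_Icc, Finset.mem_insert]
    omega
  rw [h1, h2, hins, Finset.sum_insert (by simp only [Finset.mem_Icc]; omega)]
  have h4 := hHi k
  calc 1 + ∑ j ∈ Finset.Icc (k + 1) (n - 1), Nat.card {l // Good n j l ∧ Hi l} +
        Nat.card {l // Good n k l ∧ Hi l}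
      = 1 + ∑ j ∈ Finset.Icc (k + 1) (n - 1), Nat.card {l // Good (n - 1) (j - 1) l} +
        Nat.card {l // Good (n - 1) (k - 1) l} := by
        rw [h4]
        congr 2
        exact Finset.sum_congr rfl fun j _ => hHi j
    _ = 1 + (Nat.card {l // Good (n - 1) (k - 1) l} +
        ∑ j ∈ Finset.Icc k (n - 2), Nat.card {l // Good (n - 1) j l}) := by
        rw [h3]; ring

end Stmt5Aux

/-- for `n > 3` and `k ∈ [2, n-2]`,
`θ_k^{(n)} = 1 + Σ_{j=k-1}^{n-2} θ_j^{(n-1)}`. -/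


theorem stmt5 (n k : ℕ) (hn : 3 < n) (hk : 2 ≤ k) (hk' : k ≤ n - 2) :
    theta n k = 1 + ∑ j ∈ Finset.Icc (k - 1) (n - 2), theta (n - 1) j := by
  have h : theta n k = Nat.card {l // Stmt5Aux.Good n k l} := rfl
  have h' : ∀ j, theta (n - 1) j = Nat.card {l // Stmt5Aux.Good (n - 1) j l} :=
    fun j => rfl
  rw [h, Stmt5Aux.key n k hn hk hk']
  exact congrArg (1 + ·) (Finset.sum_congr rfl fun j _ => (h' j).symm)
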